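/- arXiv:1604.02711 — 3 statements merged into one kernel-verified Lean document; each statement's English description precedes it below -/
import Mathlib

section
/- Every reachable vertex v ≠ s of a flow graph has a unique immediate dominator: a vertex d(v) ≠ v that dominates v and is dominated by every proper dominator of v. -/
variable {V : Type*}

/-- `p` is a path (walk) in the digraph `E` from `a` to `b`, given as its list of vertices. -/
def IsPath (E : V → V → Prop) (a b : V) (p : List V) : Prop :=
  p.Chain' E ∧ p.head? = some a ∧ p.getLast? = some b

/-- `v` is reachable from `s` in the digraph `E`. -/
def Reach (E : V → V → Prop) (s v : V) : Prop := ∃ p, IsPath E s v p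

/-- `w` dominates `v` in the flow graph `(E, s)`. -/
def Dom (E : V → V → Prop) (s w v : V) : Prop :=
  Reach E s v ∧ ∀ p, IsPath E s v p → w ∈ p

/-- `dv` is the immediate dominator of `v`: `dv ≠ v`, `dv` dominates `v`, and every
proper dominator of `v` dominates `dv`. -/
def IsIdom (E : V → V → Prop) (s dv v : V) : Prop :=
  dv ≠ v ∧ Dom E s dv v ∧ ∀ u, Dom E s u v → u ≠ v → Dom E s u dv

/-- `u` is an ancestor of `w` in the tree given by parent function `parent` (reflexive). -/
def Anc (parent : V → V) (u w : V) : Prop := ∃ k, parent^[k] w = u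

/-- The tree with parent function `t` has the parent property for flow graph `(E, s)`. -/
def ParentProp (E : V → V → Prop) (s : V) (t : V → V) : Prop :=
  ∀ v w, E v w → Reach E s v → Anc t (t w) v

/-- The tree with parent function `t` has the sibling property for flow graph `(E, s)`. -/
def SiblingProp (E : V → V → Prop) (s : V) (t : V → V) : Prop :=
  ∀ v w, Reach E s v → Reach E s w → v ≠ s → w ≠ s → t v = t w → v ≠ w → ¬ Dom E s v w

/-- `t` is (the parent function of) a tree rooted at `s` on the reachable vertices. -/
def IsRootedTree (E : V → V → Prop) (s : V) (t : V → V) : Prop :=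
  t s = s ∧ ∀ v, Reach E s v → (v ≠ s → Reach E s (t v)) ∧ ∃ k, t^[k] v = s

section helpers

variable {E : V → V → Prop} {s v : V}

lemma isPath_ne_nil {a b : V} {p : List V} (h : IsPath E a b p) : p ≠ [] := by
  rintro rfl; simp [IsPath] at h

lemma start_mem {a b : V} {p : List V} (h : IsPath E a b p) : a ∈ p :=
  List.mem_of_mem_head? (by simp [h.2.1])

lemma end_mem {a b : V} {p : List V} (h : IsPath E a b p) : b ∈ p :=
  List.mem_of_mem_getLast? (by simp [h.2.2])

lemma dom_refl {u : V} (h : Reach E s u) : Dom E s u u :=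
  ⟨h, fun _ hp => end_mem hp⟩

lemma isPath_prefix {w : V} {A B : List V} (h : IsPath E s v (A ++ w :: B)) :
    IsPath E s w (A ++ [w]) := by
  obtain ⟨hc, hh, _⟩ := h
  refine ⟨hc.prefix ⟨B, by simp⟩, ?_, List.getLast?_concat⟩
  rw [← hh]; simp [List.head?_append]

lemma isPath_concat {w : V} {Q A B : List V} (hQ : IsPath E s w Q)
    (h : IsPath E s v (A ++ w :: B)) : IsPath E s v (Q ++ B) := by
  obtain ⟨hc, _, hl⟩ := h
  obtain ⟨qc, qh, ql⟩ := hQ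
  have hwB : (w :: B).Chain' E := hc.suffix ⟨A, rfl⟩
  replace hwB := List.isChain_cons.mp hwB
  refine ⟨qc.append hwB.2 ?_, ?_, ?_⟩
  · intro x hx y hy
    rw [ql] at hx
    simp only [Option.mem_some_iff] at hx
    subst hx
    exact hwB.1 y hy
  · rw [List.head?_append, qh]
    have : Q ≠ [] := by rintro rfl; simp at qh
    cases Q with
    | nil => simp at qh
    | cons a Q' => simp_all
  · rw [List.getLast?_append] at hl ⊢
    rcases B with _ | ⟨b, B'⟩
    · simp only [List.getLast?_singleton] at hl
      have : w = v := by
        rcases A.getLast? with _ | x <;> simp_all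
      simp [ql, this]
    · have h2 : (w :: b :: B').getLast? = (b :: B').getLast? := by
        simp [List.getLast?_cons_cons]
      rw [h2] at hl
      have h3 : ∃ x, (b :: B').getLast? = some x := ⟨(b :: B').getLast (by simp), List.getLast?_eq_getLast _⟩
      obtain ⟨x, hx⟩ := h3
      rw [hx] at hl ⊢
      simpa using hl

lemma exists_last_split {a : V} {l : List V} (h : a ∈ l) :
    ∃ A B, l = A ++ a :: B ∧ a ∉ B := by
  induction l with
  | nil => cases h
  | cons b l ih =>
    by_cases hb : a ∈ l
    · obtain ⟨A, B, rfl, hB⟩ := ih hb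
      exact ⟨b :: A, B, rfl, hB⟩
    · have hab : a = b := by
        rcases List.mem_cons.1 h with h' | h'
        · exact h'
        · exact absurd h' hb
      subst hab
      exact ⟨[], l, rfl, hb⟩

lemma exists_first_split {a : V} {l : List V} (h : a ∈ l) :
    ∃ A B, l = A ++ a :: B ∧ a ∉ A := by
  induction l with
  | nil => cases h
  | cons b l ih =>
    by_cases hb : a = b
    · subst hb; exact ⟨[], l, rfl, by simp⟩
    · have ha : a ∈ l := by
        rcases List.mem_cons.1 h with h' | h'
        · exact absurd h' hb
        · exact h'
      obtain ⟨A, B, rfl, hA⟩ := ih ha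
      exact ⟨b :: A, B, rfl, by simp [hA, hb]⟩

lemma last_split_unique {a : V} {A₁ B₁ A₂ B₂ : List V}
    (h : A₁ ++ a :: B₁ = A₂ ++ a :: B₂) (h1 : a ∉ B₁) (h2 : a ∉ B₂) :
    A₁ = A₂ ∧ B₁ = B₂ := by
  have hs1 : (a :: B₁) <:+ (A₂ ++ a :: B₂) := ⟨A₁, h⟩
  have hs2 : (a :: B₂) <:+ (A₂ ++ a :: B₂) := ⟨A₂, rfl⟩
  have hsB1 : B₁ <:+ (A₂ ++ a :: B₂) := (List.suffix_cons a B₁).trans hs1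
  have hsB2 : B₂ <:+ (A₂ ++ a :: B₂) := (List.suffix_cons a B₂).trans hs2
  have hlen : B₁.length = B₂.length := by
    rcases lt_trichotomy B₁.length B₂.length with hl | hl | hl
    · exfalso
      have : (a :: B₁) <:+ B₂ :=
        List.suffix_of_suffix_length_le hs1 hsB2 (by simpa using hl)
      exact h2 (this.sublist.mem (List.mem_cons_self))
    · exact hl
    · exfalso
      have : (a :: B₂) <:+ B₁ :=
        List.suffix_of_suffix_length_le hs2 hsB1 (by simpa using hl)
      exact h1 (this.sublist.mem (List.mem_cons_self))
  have := List.append_inj' h (by simp [hlen])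
  exact ⟨this.1, by simpa using this.2⟩

lemma dom_antisymm {u w : V} (huw : Dom E s u w) (hwu : Dom E s w u) : u = w := by
  by_contra hne
  obtain ⟨P₀, hP₀⟩ := huw.1
  suffices H : ∀ n, ∀ P : List V, IsPath E s w P → P.length ≤ n → False from
    H P₀.length P₀ hP₀ le_rfl
  intro n
  induction n with
  | zero =>
    intro P hP hl
    exact isPath_ne_nil hP (List.length_eq_zero_iff.1 (Nat.le_zero.1 hl))
  | succ n ih =>
    intro P hP hl
    have hu : u ∈ P := huw.2 P hP
    obtain ⟨A, B, rfl, _⟩ := exists_first_split hu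
    have hPu : IsPath E s u (A ++ [u]) := isPath_prefix hP
    have hw : w ∈ A ++ [u] := hwu.2 _ hPu
    have hwA : w ∈ A := by
      rcases List.mem_append.1 hw with h | h
      · exact h
      · simp only [List.mem_singleton] at h
        exact absurd h.symm hne
    obtain ⟨C, D, hACD⟩ := List.append_of_mem hwA
    have hPw : IsPath E s w (C ++ [w]) := by
      rw [hACD] at hP
      have heq : (C ++ w :: D) ++ u :: B = C ++ w :: (D ++ u :: B) := by simp
      rw [heq] at hP
      exact isPath_prefix hP
    apply ih _ hPw
    rw [hACD] at hl
    have e1 : (C ++ [w]).length = C.length + 1 := by simp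
    have e2 : ((C ++ w :: D) ++ u :: B).length = C.length + 1 + D.length + 1 + B.length := by
      simp; omega
    omega

end helpers

/-- Every reachable vertex `v ≠ s` has a unique immediate dominator. -/
theorem idom_exists_unique (E : V → V → Prop) (s v : V)
    (hv : Reach E s v) (hvs : v ≠ s) :
    ∃! dv, IsIdom E s dv v := by
  classical
  obtain ⟨P, hP⟩ := hv
  have hvreach : Reach E s v := ⟨P, hP⟩
  have hex : ∃ n, ∃ u A B, P = A ++ u :: B ∧ u ∉ B ∧ B.length = n ∧
      Dom E s u v ∧ u ≠ v := by
    have hs : s ∈ P := start_mem hP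
    obtain ⟨A, B, hAB, hB⟩ := exists_last_split hs
    exact ⟨B.length, s, A, B, hAB, hB, rfl,
      ⟨hvreach, fun p hp => start_mem hp⟩, Ne.symm hvs⟩
  obtain ⟨dv, A, B, hPAB, hBnd, hBlen, hdv, hdvne⟩ := Nat.find_spec hex
  have hPAB' : IsPath E s v (A ++ dv :: B) := by rw [← hPAB]; exact hP
  have hreach_dv : Reach E s dv := ⟨A ++ [dv], isPath_prefix hPAB'⟩
  have hIdom : IsIdom E s dv v := by
    refine ⟨hdvne, hdv, ?_⟩
    intro u hu hune
    by_cases heq : u = dv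
    · subst heq; exact dom_refl hreach_dv
    · refine ⟨hreach_dv, fun Q hQ => ?_⟩
      have hQB : IsPath E s v (Q ++ B) := isPath_concat hQ hPAB'
      have huQB : u ∈ Q ++ B := hu.2 _ hQB
      rcases List.mem_append.1 huQB with h | h
      · exact h
      · exfalso
        obtain ⟨A', B', hPAB2, hB'⟩ := exists_last_split (hu.2 P hP)
        obtain ⟨C, D, hBCD, hD⟩ := exists_last_split h
        have h1 : P = (A ++ dv :: C) ++ u :: D := by rw [hPAB, hBCD]; simp
        have huniq := last_split_unique (h1.symm.trans hPAB2) hD hB'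
        have hle : Nat.find hex ≤ B'.length :=
          Nat.find_min' hex ⟨u, A', B', hPAB2, hB', rfl, hu, hune⟩
        rw [← huniq.2] at hle
        have hDB : D.length < B.length := by rw [hBCD]; simp; omega
        omega
  refine ⟨dv, hIdom, fun d hd =>
    dom_antisymm (hIdom.2.2 d hd.2.1 hd.1) (hd.2.2 dv hIdom.2.1 hIdom.1)⟩
end

section
/- If a tree T rooted at s on the reachable vertices of a flow graph G satisfies the parent property, then for every reachable vertex v ≠ s, the parent t(v) of v in T dominates v in G. -/
variable {V : Type*}

lemma reach_self (E : V → V → Prop) (s : V) : Reach E s s :=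
  ⟨[s], List.isChain_singleton s, rfl, rfl⟩

lemma reach_step {E : V → V → Prop} {s a b : V} (h : Reach E s a) (hab : E a b) :
    Reach E s b := by
  obtain ⟨p, hc, hh, hl⟩ := h
  refine ⟨p ++ [b], ?_, ?_, ?_⟩
  · show List.IsChain E (p ++ [b])
    rw [List.isChain_append]
    refine ⟨hc, List.isChain_singleton b, ?_⟩
    intro x hx y hy
    simp only [List.head?_cons, Option.mem_def, Option.some.injEq] at hy
    rw [hl] at hx
    simp only [Option.mem_def, Option.some.injEq] at hx
    subst hx; subst hy; exact hab
  · cases p with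
    | nil => simp at hh
    | cons c q => simpa using hh
  · simp

/-- key step lemma -/
lemma path_claim (E : V → V → Prop) (s : V) (t : V → V)
    (hpp : ParentProp E s t) (u : V) :
    ∀ p : List V, p.Chain' E → ∀ a, p.head? = some a → Reach E s a →
      ¬ Anc t u a → u ∉ p → ∀ x ∈ p, Reach E s x ∧ ¬ Anc t u x := by
  intro p
  induction p with
  | nil => intro _ a h; simp at h
  | cons a rest ih =>
    intro hc a' hh hra hna hnp x hx
    simp only [List.head?_cons, Option.some.injEq] at hh
    subst hh
    rcases List.mem_cons.mp hx with hx | hx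
    · subst hx; exact ⟨hra, hna⟩
    cases rest with
    | nil => simp at hx
    | cons b q =>
      have hE : E a b := (List.isChain_cons_cons.mp hc).1
      have hc' : (b :: q).Chain' E := (List.isChain_cons_cons.mp hc).2
      have hrb : Reach E s b := reach_step hra hE
      have hbne : b ≠ u := by
        intro h; exact hnp (by simp [h])
      have hnb : ¬ Anc t u b := by
        rintro ⟨m, hm⟩
        cases m with
        | zero => exact hbne hm
        | succ m' =>
          obtain ⟨j, hj⟩ := hpp a b hE hra
          refine hna ⟨m' + j, ?_⟩
          rw [Function.iterate_add_apply, hj, ← hm,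
            Function.iterate_succ_apply]
      have hnp' : u ∉ b :: q := fun h => hnp (List.mem_cons_of_mem _ h)
      exact ih hc' b rfl hrb hnb hnp' x hx

/-- If a tree `t` rooted at `s` on the reachable vertices has the parent property,
then the parent of every reachable vertex `v ≠ s` dominates `v`. -/
theorem parent_property_parent_dominates (E : V → V → Prop) (s : V) (t : V → V)
    (ht : IsRootedTree E s t) (hpp : ParentProp E s t)
    (v : V) (hv : Reach E s v) (hvs : v ≠ s) :
    Dom E s (t v) v := by
  refine ⟨hv, fun p hp => ?_⟩
  obtain ⟨hc, hh, hl⟩ := hp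
  by_contra hnp
  have hne : p ≠ [] := by rintro rfl; simp at hh
  have hvmem : v ∈ p := by
    have := List.getLast?_eq_getLast hne
    rw [this] at hl
    simp only [Option.some.injEq] at hl
    rw [← hl]; exact List.getLast_mem hne
  have htvs : t v ≠ s := by
    intro h
    apply hnp
    rw [h]
    cases p with
    | nil => simp at hh
    | cons a q =>
      simp only [List.head?_cons, Option.some.injEq] at hh
      simp [← hh]
  have hnas : ¬ Anc t (t v) s := by
    rintro ⟨k, hk⟩
    exact htvs (hk.symm.trans (Function.iterate_fixed ht.1 k))
  have hclaim := path_claim E s t hpp (t v) p hc s hh (reach_self E s)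
    hnas hnp v hvmem
  exact hclaim.2 ⟨1, rfl⟩
end

section
/- Deleting an edge from a flow graph cannot violate the parent property of the dominator tree: if G' is obtained from G by deleting an edge, then for every edge (v, w) of G' with v reachable from s in G', v is a descendant of d(w) in the dominator tree D of G, where d(w) is the parent of w in D. -/
variable {V : Type*}

/-- A prefix path: if `u ∈ p` and `p` is a path from `s` to `v`,
there is a path from `s` to `u`, shorter if `u ≠ v`. -/
lemma prefix_path {E : V → V → Prop} {s v u : V} {p : List V}
    (hp : IsPath E s v p) (hu : u ∈ p) :
    ∃ q, IsPath E s u q ∧ (u ≠ v → q.length < p.length) := by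
  obtain ⟨l1, l2, rfl⟩ := List.append_of_mem hu
  refine ⟨l1 ++ [u], ⟨hp.1.prefix ⟨l2, by simp⟩, ?_, List.getLast?_concat⟩, ?_⟩
  · cases l1 with
    | nil => simpa using hp.2.1
    | cons x l => simpa using hp.2.1
  · intro hne
    rcases eq_or_ne l2 [] with rfl | h2
    · exact absurd (by simpa [List.getLast?_concat] using hp.2.2) hne
    · simp [List.length_append]
      exact Nat.pos_of_ne_zero (by simpa using h2)

lemma dom_reach {E : V → V → Prop} {s u v : V} (h : Dom E s u v) : Reach E s u := by
  obtain ⟨⟨p, hp⟩, hmem⟩ := h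
  obtain ⟨q, hq, -⟩ := prefix_path hp (hmem p hp)
  exact ⟨q, hq⟩

/-- Every dominator of a reachable vertex is an ancestor in the idom tree. -/
lemma anc_of_dom {E : V → V → Prop} {s : V} {d : V → V}
    (hd : ∀ u, Reach E s u → u ≠ s → IsIdom E s (d u) u) :
    ∀ n, ∀ v, ∀ p : List V, IsPath E s v p → p.length ≤ n →
      ∀ u, Dom E s u v → ∃ k, d^[k] v = u := by
  intro n
  induction n with
  | zero =>
    intro v p hp hlen
    cases p with
    | nil => simp [IsPath] at hp
    | cons x l => simp at hlen
  | succ n ih =>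
    intro v p hp hlen u hu
    rcases eq_or_ne u v with rfl | hne
    · exact ⟨0, rfl⟩
    have hvs : v ≠ s := by
      intro h
      have hPs : IsPath E s v [v] := ⟨List.isChain_singleton v, by simp [h], by simp [h]⟩
      have := hu.2 [v] hPs
      simp at this
      exact hne this
    have hidom := hd v hu.1 hvs
    have hdomdv : Dom E s u (d v) := hidom.2.2 u hu hne
    have hdvmem : d v ∈ p := hidom.2.1.2 p hp
    obtain ⟨q, hq, hlt⟩ := prefix_path hp hdvmem
    have hlen' : q.length ≤ n := by
      have := hlt hidom.1
      omega
    obtain ⟨k, hk⟩ := ih (d v) q hq hlen' u hdomdv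
    exact ⟨k + 1, by rw [Function.iterate_succ_apply, hk]⟩

/-- Deleting an edge cannot violate the parent property of the dominator tree:
for every edge `(v, w)` of `G' = G - (a, b)` with `v` reachable in `G'`,
`v` is a descendant of `d w` in the dominator tree of `G`. -/
theorem deletion_preserves_parent_property (E : V → V → Prop) (s : V) (d : V → V)
    (hd : ∀ u, Reach E s u → u ≠ s → IsIdom E s (d u) u)
    (a b v w : V)
    (hvw : (fun p q => E p q ∧ ¬ (p = a ∧ q = b)) v w)
    (hv : Reach (fun p q => E p q ∧ ¬ (p = a ∧ q = b)) s v) :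
    Anc d (d w) v := by
  -- v is reachable in G
  obtain ⟨p, hp⟩ := hv
  have hpE : IsPath E s v p := ⟨hp.1.imp (fun _ _ h => h.1), hp.2⟩
  have hvreach : Reach E s v := ⟨p, hpE⟩
  have hEvw : E v w := hvw.1
  have hpne : p ≠ [] := by
    intro h; rw [h] at hpE; simp [IsPath] at hpE
  -- extending any path to v by w gives a path to w
  have hext : ∀ q : List V, IsPath E s v q → IsPath E s w (q ++ [w]) := by
    intro q hq
    have hqne : q ≠ [] := by
      intro h; rw [h] at hq; simp [IsPath] at hq
    refine ⟨?_, ?_, List.getLast?_concat⟩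
    · refine List.isChain_append.mpr ?_
      refine ⟨hq.1, List.isChain_singleton w, ?_⟩
      intro x hx y hy
      simp at hy
      rw [hq.2.2] at hx
      simp at hx
      rw [← hx, ← hy]; exact hEvw
    · rw [List.head?_append_of_ne_nil _ hqne]; exact hq.2.1
  rcases eq_or_ne w s with hws | hws
  · -- s dominates v, so some d^[k] v = s, then d^[k+1] v = d s = d w
    have hsdom : Dom E s s v := by
      refine ⟨hvreach, fun q hq => ?_⟩
      have := hq.2.1
      cases q with
      | nil => simp at this
      | cons x l => simp at this; simp [this]
    obtain ⟨k, hk⟩ := anc_of_dom hd p.length v p hpE le_rfl s hsdom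
    exact ⟨k + 1, by rw [Function.iterate_succ_apply', hk, hws]⟩
  · have hwreach : Reach E s w := ⟨p ++ [w], hext p hpE⟩
    have hidom := hd w hwreach hws
    have hdwdomv : Dom E s (d w) v := by
      refine ⟨hvreach, fun q hq => ?_⟩
      have hmem : d w ∈ q ++ [w] := hidom.2.1.2 (q ++ [w]) (hext q hq)
      rcases List.mem_append.mp hmem with h | h
      · exact h
      · simp at h
        exact absurd h hidom.1
    exact anc_of_dom hd p.length v p hpE le_rfl (d w) hdwdomv
end
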